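/- Let a < b be real numbers, V : [a,b] → ℝ continuous, λ ∈ ℂ, and Φ : [a,b] → ℂ a C² function. Suppose that for every smooth function ψ : ℝ → ℂ with compact support contained in the open interval (a,b), ∫ₐᵇ conj(ψ'(x)) Φ'(x) dx + ∫ₐᵇ conj(ψ(x)) V(x) Φ(x) dx = λ ∫ₐᵇ conj(ψ(x)) Φ(x) dx. Then −Φ''(x) + V(x)Φ(x) = λΦ(x) for all x ∈ (a,b). -/

import Mathlib

/-- A weak solution of the eigenvalue equation `-Φ'' + VΦ = λΦ` on `[a,b]`, tested against
all smooth functions compactly supported in the open interval `(a,b)`, is a strong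
solution in the interior. -/
theorem stmt_7 (a b : ℝ) (hab : a < b) (V : ℝ → ℝ) (hV : ContinuousOn V (Set.Icc a b))
    (lam : ℂ) (Φ Φ' Φ'' : ℝ → ℂ)
    (hΦ : ∀ x ∈ Set.Icc a b, HasDerivAt Φ (Φ' x) x)
    (hΦ' : ∀ x ∈ Set.Icc a b, HasDerivAt Φ' (Φ'' x) x)
    (hΦ''c : ContinuousOn Φ'' (Set.Icc a b))
    (hweak : ∀ ψ : ℝ → ℂ, ContDiff ℝ (⊤ : ℕ∞) ψ → tsupport ψ ⊆ Set.Ioo a b →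
      (∫ x in a..b, (starRingEnd ℂ) (deriv ψ x) * Φ' x)
        + (∫ x in a..b, (starRingEnd ℂ) (ψ x) * (V x : ℂ) * Φ x)
      = lam * ∫ x in a..b, (starRingEnd ℂ) (ψ x) * Φ x) :
    ∀ x ∈ Set.Ioo a b, -Φ'' x + (V x : ℂ) * Φ x = lam * Φ x := by
  set g : ℝ → ℂ := fun x => -Φ'' x + (V x : ℂ) * Φ x - lam * Φ x with hg
  have hIcc : Set.uIcc a b = Set.Icc a b := Set.uIcc_of_le hab.le
  have hΦc : ContinuousOn Φ (Set.Icc a b) :=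
    fun x hx => (hΦ x hx).continuousAt.continuousWithinAt
  have hΦ'c : ContinuousOn Φ' (Set.Icc a b) :=
    fun x hx => (hΦ' x hx).continuousAt.continuousWithinAt
  have hVc : ContinuousOn (fun x => (V x : ℂ)) (Set.Icc a b) :=
    Complex.continuous_ofReal.comp_continuousOn hV
  have hgc : ContinuousOn g (Set.Icc a b) :=
    ((hΦ''c.neg.add (hVc.mul hΦc)).sub (continuousOn_const.mul hΦc))
  -- Step A: ∫ conj ψ * g = 0 for all test functions ψ
  have key : ∀ ψ : ℝ → ℂ, ContDiff ℝ (⊤ : ℕ∞) ψ → tsupport ψ ⊆ Set.Ioo a b →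
      ∫ x in a..b, (starRingEnd ℂ) (ψ x) * g x = 0 := by
    intro ψ hψ hsupp
    have hψc : Continuous ψ := hψ.continuous
    have hψd : ∀ x, HasDerivAt ψ (deriv ψ x) x :=
      fun x => (hψ.differentiable (by simp) x).hasDerivAt
    have hψa : ψ a = 0 := image_eq_zero_of_notMem_tsupport
      (fun h => (lt_irrefl a (hsupp h).1))
    have hψb : ψ b = 0 := image_eq_zero_of_notMem_tsupport
      (fun h => (lt_irrefl b (hsupp h).2))
    have huc : Continuous (fun x => (starRingEnd ℂ) (ψ x)) := by continuity
    have hu'c : Continuous (fun x => (starRingEnd ℂ) (deriv ψ x)) := by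
      have : Continuous (deriv ψ) := hψ.continuous_deriv (by exact_mod_cast le_top)
      continuity
    -- integration by parts: ∫ conj ψ * Φ'' = - ∫ conj (deriv ψ) * Φ'
    have ibp : ∫ x in a..b, (starRingEnd ℂ) (ψ x) * Φ'' x
        = -∫ x in a..b, (starRingEnd ℂ) (deriv ψ x) * Φ' x := by
      have H := intervalIntegral.integral_mul_deriv_eq_deriv_mul
        (u := fun x => (starRingEnd ℂ) (ψ x)) (v := Φ')
        (u' := fun x => (starRingEnd ℂ) (deriv ψ x)) (v' := Φ'')
        (fun x hx => by
          simpa only [starRingEnd_apply] using (hψd x).star)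
        (fun x hx => hΦ' x (hIcc ▸ hx))
        (hu'c.continuousOn.intervalIntegrable)
        ((hΦ''c.mono (le_of_eq hIcc)).intervalIntegrable)
      simp only [hψa, hψb, map_zero, zero_mul, sub_zero, zero_sub] at H
      exact H
    have h1 : IntervalIntegrable (fun x => (starRingEnd ℂ) (ψ x) * Φ'' x) MeasureTheory.volume a b :=
      (huc.continuousOn.mul (hΦ''c.mono (le_of_eq hIcc))).intervalIntegrable
    have h2 : IntervalIntegrable (fun x => (starRingEnd ℂ) (ψ x) * (V x : ℂ) * Φ x) MeasureTheory.volume a b :=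
      ((huc.continuousOn.mul (hVc.mono (le_of_eq hIcc))).mul
        (hΦc.mono (le_of_eq hIcc))).intervalIntegrable
    have h3 : IntervalIntegrable (fun x => (starRingEnd ℂ) (ψ x) * Φ x) MeasureTheory.volume a b :=
      (huc.continuousOn.mul (hΦc.mono (le_of_eq hIcc))).intervalIntegrable
    have expand : ∀ x, (starRingEnd ℂ) (ψ x) * g x
        = -((starRingEnd ℂ) (ψ x) * Φ'' x) + (starRingEnd ℂ) (ψ x) * (V x : ℂ) * Φ x
          - lam * ((starRingEnd ℂ) (ψ x) * Φ x) := by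
      intro x; simp only [hg]; ring
    calc ∫ x in a..b, (starRingEnd ℂ) (ψ x) * g x
        = ∫ x in a..b, (-((starRingEnd ℂ) (ψ x) * Φ'' x)
            + (starRingEnd ℂ) (ψ x) * (V x : ℂ) * Φ x
            - lam * ((starRingEnd ℂ) (ψ x) * Φ x)) := by
          simp_rw [expand]
      _ = (∫ x in a..b, (-((starRingEnd ℂ) (ψ x) * Φ'' x)
            + (starRingEnd ℂ) (ψ x) * (V x : ℂ) * Φ x))
            - ∫ x in a..b, lam * ((starRingEnd ℂ) (ψ x) * Φ x) :=
          intervalIntegral.integral_sub (h1.neg.add h2) (h3.const_mul lam)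
      _ = ((∫ x in a..b, -((starRingEnd ℂ) (ψ x) * Φ'' x))
            + ∫ x in a..b, (starRingEnd ℂ) (ψ x) * (V x : ℂ) * Φ x)
            - ∫ x in a..b, lam * ((starRingEnd ℂ) (ψ x) * Φ x) := by
          have h1n : IntervalIntegrable
              (fun x => -((starRingEnd ℂ) (ψ x) * Φ'' x)) MeasureTheory.volume a b := h1.neg
          rw [intervalIntegral.integral_add h1n h2]
      _ = (-(∫ x in a..b, (starRingEnd ℂ) (ψ x) * Φ'' x)
            + ∫ x in a..b, (starRingEnd ℂ) (ψ x) * (V x : ℂ) * Φ x)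
            - lam * ∫ x in a..b, (starRingEnd ℂ) (ψ x) * Φ x := by
          rw [intervalIntegral.integral_neg, intervalIntegral.integral_const_mul]
      _ = 0 := by
          rw [ibp, neg_neg, hweak ψ hψ hsupp, sub_self]
  -- Step B: g = 0 a.e. on Ioo a b
  have hloc : MeasureTheory.LocallyIntegrableOn g (Set.Ioo a b) MeasureTheory.volume :=
    (hgc.mono Set.Ioo_subset_Icc_self).locallyIntegrableOn measurableSet_Ioo
  have hae : ∀ᵐ x ∂(MeasureTheory.volume), x ∈ Set.Ioo a b → g x = 0 := by
    apply isOpen_Ioo.ae_eq_zero_of_integral_contDiff_smul_eq_zero hloc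
    intro ψ₀ hψ₀ hcs hsupp
    set ψ : ℝ → ℂ := fun x => (ψ₀ x : ℂ) with hψdef
    have hψ : ContDiff ℝ (⊤ : ℕ∞) ψ :=
      Complex.ofRealCLM.contDiff.comp hψ₀
    have hsupp' : tsupport ψ ⊆ Set.Ioo a b := by
      refine subset_trans (closure_mono ?_) hsupp
      intro x hx
      simp only [Function.mem_support, hψdef] at hx ⊢
      exact fun h => hx (by simp [h])
    have hzero := key ψ hψ hsupp'
    have hout : ∀ x ∉ Set.Ioo a b, ψ₀ x • g x = 0 := by
      intro x hx
      have : ψ₀ x = 0 := image_eq_zero_of_notMem_tsupport (fun h => hx (hsupp h))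
      simp [this]
    rw [← MeasureTheory.setIntegral_eq_integral_of_forall_compl_eq_zero hout]
    rw [← MeasureTheory.integral_Ioc_eq_integral_Ioo,
      ← intervalIntegral.integral_of_le hab.le]
    rw [← hzero]
    apply intervalIntegral.integral_congr
    intro x _
    simp [hψdef, Complex.conj_ofReal, Complex.real_smul]
  -- Step C: continuity gives pointwise vanishing
  intro x hx
  rw [← sub_eq_zero]
  have hgx : -Φ'' x + (V x : ℂ) * Φ x - lam * Φ x = g x := rfl
  rw [hgx]
  by_contra hne
  have hopen : IsOpen (Set.Ioo a b ∩ g ⁻¹' {(0 : ℂ)}ᶜ) :=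
    (hgc.mono Set.Ioo_subset_Icc_self).isOpen_inter_preimage isOpen_Ioo
      isOpen_compl_singleton
  have hmem : x ∈ Set.Ioo a b ∩ g ⁻¹' {(0 : ℂ)}ᶜ := ⟨hx, hne⟩
  have hpos : 0 < MeasureTheory.volume (Set.Ioo a b ∩ g ⁻¹' {(0 : ℂ)}ᶜ) :=
    hopen.measure_pos _ ⟨x, hmem⟩
  have hnull : MeasureTheory.volume {y | ¬(y ∈ Set.Ioo a b → g y = 0)} = 0 :=
    MeasureTheory.ae_iff.mp hae
  have hsub : Set.Ioo a b ∩ g ⁻¹' {(0 : ℂ)}ᶜ ⊆ {y | ¬(y ∈ Set.Ioo a b → g y = 0)} := by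
    intro y hy
    exact fun h => hy.2 (h hy.1)
  exact absurd (MeasureTheory.measure_mono_null hsub hnull) (by simpa using hpos.ne')
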